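/- Let V(φ) = -(d(d-1)/(2κ²l²)) cosh((2/3)√(dκ²/(d-1)) φ). Then for every ν ≥ -1, the function W(φ;ν) = -((d-1)/(κ²l)) (1-ρ²)^{-3/4} (1-ρ² + √(1+2νρ+ρ²)) / √(2(1+νρ+√(1+2νρ+ρ²))), where ρ = tanh((2/3)√(dκ²/(d-1)) φ), satisfies the fake superpotential equation V(φ) = (1/2)(W'(φ)² - (dκ²/(d-1)) W(φ)²) on the domain where 1+2νρ+ρ² > 0. -/

import Mathlib

set_option maxHeartbeats 1000000


open Real

lemma aux_tanh_deriv (x : ℝ) : HasDerivAt Real.tanh (1 - Real.tanh x ^ 2) x := by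
  have h := (Real.hasDerivAt_sinh x).div (Real.hasDerivAt_cosh x) (Real.cosh_pos x).ne'
  have hfun : (Real.sinh / Real.cosh) = Real.tanh :=
    funext fun y => (Real.tanh_eq_sinh_div_cosh y).symm
  rw [hfun] at h
  refine h.congr_deriv ?_
  symm
  have h2 := Real.cosh_sq_sub_sinh_sq x
  have hne := (Real.cosh_pos x).ne'
  rw [Real.tanh_eq_sinh_div_cosh]
  field_simp

lemma aux_tanh_sq (x : ℝ) : Real.tanh x ^ 2 < 1 := by
  have h2 := Real.cosh_sq_sub_sinh_sq x
  have hc := Real.cosh_pos x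
  rw [Real.tanh_eq_sinh_div_cosh, div_pow, div_lt_one (by positivity)]
  nlinarith

lemma aux_cosh (x : ℝ) : Real.cosh x = 1 / Real.sqrt (1 - Real.tanh x ^ 2) := by
  have h2 := Real.cosh_sq_sub_sinh_sq x
  have hc := Real.cosh_pos x
  have h3 : 1 - Real.tanh x ^ 2 = (1 / Real.cosh x) ^ 2 := by
    rw [Real.tanh_eq_sinh_div_cosh]; field_simp; exact h2
  rw [h3, Real.sqrt_sq (by positivity)]
  field_simp

lemma aux_deriv (ν C r s t q : ℝ) (hp : 0 < 1 - r ^ 2) (hsq : 0 < 1 + 2 * ν * r + r ^ 2)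
    (hu : 0 < 1 + ν * r + s)
    (hs : s = Real.sqrt (1 + 2 * ν * r + r ^ 2))
    (ht : t = Real.sqrt (2 * (1 + ν * r + s)))
    (hq : q = (1 - r ^ 2) ^ (-(3 : ℝ) / 4)) :
    HasDerivAt (fun x : ℝ => -C * (1 - x ^ 2) ^ (-(3 : ℝ) / 4) *
      (1 - x ^ 2 + Real.sqrt (1 + 2 * ν * x + x ^ 2)) /
      Real.sqrt (2 * (1 + ν * x + Real.sqrt (1 + 2 * ν * x + x ^ 2))))
      (-(3 / 2) * C * r * q * s / ((1 - r ^ 2) * t)) r := by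
  have hs2 : s ^ 2 = 1 + 2 * ν * r + r ^ 2 := by rw [hs]; exact Real.sq_sqrt hsq.le
  have hspos : 0 < s := by rw [hs]; exact Real.sqrt_pos.mpr hsq
  have ht2 : t ^ 2 = 2 * (1 + ν * r + s) := by rw [ht]; exact Real.sq_sqrt (by linarith)
  have htpos : 0 < t := by rw [ht]; exact Real.sqrt_pos.mpr (by linarith)
  have hqpos : 0 < q := by rw [hq]; exact Real.rpow_pos_of_pos hp _
  have hd1 : HasDerivAt (fun x : ℝ => 1 - x ^ 2) (-(2 * r)) r := by
    simpa using (hasDerivAt_pow 2 r).const_sub 1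
  have hA : HasDerivAt (fun x : ℝ => (1 - x ^ 2) ^ (-(3 : ℝ) / 4))
      (-(2 * r) * (-(3 : ℝ) / 4) * (1 - r ^ 2) ^ (-(3 : ℝ) / 4 - 1)) r :=
    hd1.rpow_const (Or.inl hp.ne')
  have hSin : HasDerivAt (fun x : ℝ => 1 + 2 * ν * x + x ^ 2) (2 * ν + 2 * r) r := by
    have h1 : HasDerivAt (fun x : ℝ => 1 + 2 * ν * x) (2 * ν) r := by
      simpa using ((hasDerivAt_id r).const_mul (2 * ν)).const_add 1
    exact (h1.add (hasDerivAt_pow 2 r)).congr_deriv (by norm_num)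
  have hS : HasDerivAt (fun x : ℝ => Real.sqrt (1 + 2 * ν * x + x ^ 2))
      ((2 * ν + 2 * r) / (2 * s)) r := by
    have h2 := hSin.sqrt hsq.ne'
    rwa [← hs] at h2
  have hB := hd1.add hS
  have hUin : HasDerivAt (fun x : ℝ => 2 * (1 + ν * x + Real.sqrt (1 + 2 * ν * x + x ^ 2)))
      (2 * (ν + (2 * ν + 2 * r) / (2 * s))) r := by
    have h1 : HasDerivAt (fun x : ℝ => 1 + ν * x) ν r := by
      simpa using ((hasDerivAt_id r).const_mul ν).const_add 1
    exact (h1.add hS).const_mul 2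
  have hargne : 2 * (1 + ν * r + Real.sqrt (1 + 2 * ν * r + r ^ 2)) ≠ 0 := by
    rw [← hs]; exact (by linarith : (0:ℝ) < 2 * (1 + ν * r + s)).ne'
  have hT : HasDerivAt
      (fun x : ℝ => Real.sqrt (2 * (1 + ν * x + Real.sqrt (1 + 2 * ν * x + x ^ 2))))
      (2 * (ν + (2 * ν + 2 * r) / (2 * s)) / (2 * t)) r := by
    have h2 := hUin.sqrt hargne
    rwa [← hs, ← ht] at h2
  have hN := (hA.const_mul (-C)).mul hB
  have hTne : Real.sqrt (2 * (1 + ν * r + Real.sqrt (1 + 2 * ν * r + r ^ 2))) ≠ 0 := by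
    rw [← hs, ← ht]; exact htpos.ne'
  have hg := hN.div hT hTne
  refine hg.congr_deriv ?_
  symm
  have hq1 : (1 - r ^ 2 : ℝ) ^ (-(3 : ℝ) / 4 - 1) = q / (1 - r ^ 2) := by
    rw [Real.rpow_sub hp, Real.rpow_one, hq]
  beta_reduce
  rw [← hs, ← ht, ← hq, hq1]
  simp only [Pi.mul_apply, Pi.add_apply]
  rw [← hs, ← hq]
  field_simp
  linear_combination (4*C*(1-r^2)*(2*ν+2*r-r*s)) * ht2 + (-8*C*(1-r^2)*(r+ν)) * hs2


/-- For the '2/3' potential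
V(φ) = -(d(d-1)/(2κ²l²)) cosh((2/3)√(dκ²/(d-1)) φ), and for every ν ≥ -1, the
fake superpotential
W(φ) = -((d-1)/(κ²l)) (1-ρ²)^{-3/4}(1-ρ²+√(1+2νρ+ρ²))/√(2(1+νρ+√(1+2νρ+ρ²))),
ρ = tanh((2/3)√(dκ²/(d-1)) φ), satisfies V = (1/2)(W'² - (dκ²/(d-1)) W²)
wherever 1+2νρ+ρ² > 0. -/
theorem stmt6 (d κ l ν : ℝ) (hd : 1 < d) (hκ : 0 < κ) (hl : 0 < l) (hν : -1 ≤ ν)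
    (V W ρ : ℝ → ℝ)
    (hρ : ∀ φ, ρ φ = Real.tanh ((2 / 3) * Real.sqrt (d * κ ^ 2 / (d - 1)) * φ))
    (hV : ∀ φ, V φ = -(d * (d - 1) / (2 * κ ^ 2 * l ^ 2)) *
      Real.cosh ((2 / 3) * Real.sqrt (d * κ ^ 2 / (d - 1)) * φ))
    (hW : ∀ φ, W φ = -((d - 1) / (κ ^ 2 * l)) * (1 - ρ φ ^ 2) ^ (-(3 : ℝ) / 4) *
      (1 - ρ φ ^ 2 + Real.sqrt (1 + 2 * ν * ρ φ + ρ φ ^ 2)) /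
      Real.sqrt (2 * (1 + ν * ρ φ + Real.sqrt (1 + 2 * ν * ρ φ + ρ φ ^ 2)))) :
    ∀ φ : ℝ, 0 < 1 + 2 * ν * ρ φ + ρ φ ^ 2 →
      V φ = (1 / 2) * ((deriv W φ) ^ 2 - (d * κ ^ 2 / (d - 1)) * (W φ) ^ 2) := by
  intro φ hsq
  have hd0 : (0 : ℝ) < d - 1 := by linarith
  have hK : 0 < d * κ ^ 2 / (d - 1) := by positivity
  set c : ℝ := 2 / 3 * Real.sqrt (d * κ ^ 2 / (d - 1)) with hc
  set C : ℝ := (d - 1) / (κ ^ 2 * l) with hC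
  rw [hρ φ] at hsq
  have hc2 : c ^ 2 = 4 / 9 * (d * κ ^ 2 / (d - 1)) := by
    rw [hc, mul_pow, Real.sq_sqrt hK.le]; ring
  have hrt2 : Real.tanh (c * φ) ^ 2 < 1 := aux_tanh_sq (c * φ)
  have hp : 0 < 1 - Real.tanh (c * φ) ^ 2 := by linarith
  have hnr : 0 < 1 + ν * Real.tanh (c * φ) := by
    set r := Real.tanh (c * φ)
    rcases le_or_gt 0 r with h | h
    · have h1 : r < 1 := by nlinarith
      nlinarith [mul_nonneg (by linarith : (0:ℝ) ≤ ν + 1) h]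
    · rcases le_or_gt 0 (ν + r) with h2 | h2
      · nlinarith [mul_nonneg (by linarith : (0:ℝ) ≤ -r) h2]
      · nlinarith [mul_pos (neg_pos.mpr h) (neg_pos.mpr h2)]
  have hspos : 0 < Real.sqrt (1 + 2 * ν * Real.tanh (c * φ) + Real.tanh (c * φ) ^ 2) :=
    Real.sqrt_pos.mpr hsq
  have hu : 0 < 1 + ν * Real.tanh (c * φ) +
      Real.sqrt (1 + 2 * ν * Real.tanh (c * φ) + Real.tanh (c * φ) ^ 2) := by linarith
  -- derivative of inner function
  have hlin : HasDerivAt (fun x : ℝ => c * x) c φ := by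
    simpa using (hasDerivAt_id φ).const_mul c
  have hρd : HasDerivAt (fun x : ℝ => Real.tanh (c * x))
      ((1 - Real.tanh (c * φ) ^ 2) * c) φ := by
    have h2 := (aux_tanh_deriv (c * φ)).comp φ hlin
    exact h2
  have hg := aux_deriv ν C (Real.tanh (c * φ)) _ _ _ hp hsq hu rfl rfl rfl
  have hcomp := hg.comp φ hρd
  have hWeq : W = (fun x : ℝ => -C * (1 - x ^ 2) ^ (-(3 : ℝ) / 4) *
      (1 - x ^ 2 + Real.sqrt (1 + 2 * ν * x + x ^ 2)) /
      Real.sqrt (2 * (1 + ν * x + Real.sqrt (1 + 2 * ν * x + x ^ 2)))) ∘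
      (fun x : ℝ => Real.tanh (c * x)) := by
    funext ψ
    rw [hW ψ, hρ ψ]
    rfl
  have hWd := hWeq.symm ▸ hcomp
  have hdW := hWd.deriv
  rw [hV φ, hW φ, hρ φ, hdW, aux_cosh (c * φ)]
  set r : ℝ := Real.tanh (c * φ) with hrdef
  set s : ℝ := Real.sqrt (1 + 2 * ν * r + r ^ 2) with hsdef
  set t : ℝ := Real.sqrt (2 * (1 + ν * r + s)) with htdef
  set q : ℝ := (1 - r ^ 2) ^ (-(3 : ℝ) / 4) with hqdef
  set sp : ℝ := Real.sqrt (1 - r ^ 2) with hspdef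
  have hs2 : s ^ 2 = 1 + 2 * ν * r + r ^ 2 := by rw [hsdef]; exact Real.sq_sqrt hsq.le
  have ht2 : t ^ 2 = 2 * (1 + ν * r + s) := by
    rw [htdef]; exact Real.sq_sqrt (by linarith)
  have htpos : 0 < t := by rw [htdef]; exact Real.sqrt_pos.mpr (by linarith)
  have hsppos : 0 < sp := by rw [hspdef]; exact Real.sqrt_pos.mpr hp
  have h1 : q ^ 2 = (1 - r ^ 2) ^ (-(3 : ℝ) / 2) := by
    rw [hqdef, ← Real.rpow_natCast ((1 - r ^ 2) ^ (-(3 : ℝ) / 4)) 2, ← Real.rpow_mul hp.le]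
    norm_num
  have hqp : q ^ 2 * (1 - r ^ 2) = 1 / sp := by
    rw [h1, hspdef, Real.sqrt_eq_rpow, one_div, ← Real.rpow_neg hp.le]
    nth_rewrite 2 [← Real.rpow_one (1 - r ^ 2)]
    rw [← Real.rpow_add hp]
    norm_num
  clear hWeq hρd hlin hρ hV hW hrdef hsdef htdef hqdef hspdef
  clear_value r s t q sp c C
  have e1 : (-(3 / 2) * C * r * q * s / ((1 - r ^ 2) * t) * ((1 - r ^ 2) * c)) ^ 2 =
      9 / 4 * C ^ 2 * c ^ 2 * r ^ 2 * q ^ 2 * s ^ 2 / t ^ 2 := by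
    field_simp
    ring
  have e2 : (-C * q * (1 - r ^ 2 + s) / t) ^ 2 = C ^ 2 * q ^ 2 * (1 - r ^ 2 + s) ^ 2 / t ^ 2 := by
    rw [div_pow]; ring
  have hcomb : 9 / 4 * C ^ 2 * c ^ 2 * r ^ 2 * q ^ 2 * s ^ 2 / t ^ 2 -
      d * κ ^ 2 / (d - 1) * (C ^ 2 * q ^ 2 * (1 - r ^ 2 + s) ^ 2 / t ^ 2) =
      -(d * κ ^ 2 / (d - 1)) * C ^ 2 * (q ^ 2 * (1 - r ^ 2)) := by
    rw [hc2, ht2]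
    have h2u : (2 * (1 + ν * r + s)) ≠ 0 := by positivity
    have h2u' : (1 + ν * r + s) ≠ 0 := by positivity
    field_simp
    rw [div_eq_iff (by contrapose! h2u'; linarith)]
    linear_combination (-C^2*q^2*(1-r^2)) * hs2
  rw [e1, e2, hcomb, hqp, hC]
  field_simp
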